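/- arXiv:1302.0441 — 2 statements merged into one kernel-verified Lean document; each statement's English description precedes it below -/
import Mathlib

section
/- Let G = JᵀJ be positive definite with blocks as above and E a symmetric matrix with E_{zz} = 0. Let U = [[I, (G_{yz}+E_{yz})G_{zz}⁻¹],[0, I]]. Then the yy-block of U⁻¹ G U⁻ᵀ equals G_s + E_{yz}G_{zz}⁻¹E_{zy}, where G_s = G_{yy} − G_{yz}G_{zz}⁻¹G_{zy}; the yz-block equals −E_{yz} and the zz-block equals G_{zz}. -/
open Matrix

/-- For `G = JᵀJ` positive definite with blocks `G_yy, G_yz, G_zy = G_yzᵀ, G_zz`,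
`E` symmetric with `E_zz = 0`, and `U = [[I, (G_yz+E_yz)G_zz⁻¹],[0, I]]`, the matrix
`U⁻¹ G U⁻ᵀ` equals `[[G_s + E_yz G_zz⁻¹ E_zy, -E_yz],[-E_zy, G_zz]]`
where `G_s = G_yy - G_yz G_zz⁻¹ G_zy`. -/
theorem stmt9 {p q : ℕ}
    (Gyy : Matrix (Fin p) (Fin p) ℝ) (Gyz : Matrix (Fin p) (Fin q) ℝ)
    (Gzz : Matrix (Fin q) (Fin q) ℝ) (Eyz : Matrix (Fin p) (Fin q) ℝ)
    (hG : (Matrix.fromBlocks Gyy Gyz Gyzᵀ Gzz).PosDef)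
    (Uinv : Matrix (Fin p ⊕ Fin q) (Fin p ⊕ Fin q) ℝ)
    (hUinv : Uinv = Matrix.fromBlocks 1 (-((Gyz + Eyz) * Gzz⁻¹)) 0 1)
    (Gs : Matrix (Fin p) (Fin p) ℝ) (hGs : Gs = Gyy - Gyz * Gzz⁻¹ * Gyzᵀ) :
    Uinv * (Matrix.fromBlocks Gyy Gyz Gyzᵀ Gzz) * Uinvᵀ =
      Matrix.fromBlocks (Gs + Eyz * Gzz⁻¹ * Eyzᵀ) (-Eyz) (-Eyzᵀ) Gzz := by
  have hz : Gzz.PosDef := by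
    refine Matrix.PosDef.of_dotProduct_mulVec_pos (Matrix.isHermitian_fromBlocks_iff.mp hG.1).2.2.2 fun x hx => ?_
    have hx' : (Sum.elim (0 : Fin p → ℝ) x) ≠ 0 := by
      intro h
      apply hx
      funext i
      exact congrFun h (Sum.inr i)
    have := hG.dotProduct_mulVec_pos hx'
    simpa [Matrix.mulVec, dotProduct, Fintype.sum_sum_type] using this
  have hsym : Gzzᵀ = Gzz := hz.1
  have hdet : IsUnit Gzz.det := hz.det_pos.ne'.isUnit
  have h1 : Gzz⁻¹ * Gzz = 1 := Matrix.nonsing_inv_mul _ hdet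
  have h2 : Gzz * Gzz⁻¹ = 1 := Matrix.mul_nonsing_inv _ hdet
  have hinvsym : (Gzz⁻¹)ᵀ = Gzz⁻¹ := by
    rw [Matrix.transpose_nonsing_inv, hsym]
  have hK : ∀ {m : ℕ} (X : Matrix (Fin q) (Fin m) ℝ), Gzz * (Gzz⁻¹ * X) = X := fun X => by
    rw [← Matrix.mul_assoc, h2, Matrix.one_mul]
  have hK2 : ∀ {m : ℕ} (X : Matrix (Fin q) (Fin m) ℝ), Gzz⁻¹ * (Gzz * X) = X := fun X => by
    rw [← Matrix.mul_assoc, h1, Matrix.one_mul]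
  subst hUinv hGs
  rw [Matrix.fromBlocks_transpose, Matrix.fromBlocks_multiply, Matrix.fromBlocks_multiply,
    Matrix.fromBlocks_inj]
  refine ⟨?_, ?_, ?_, ?_⟩ <;>
    simp only [Matrix.transpose_one, Matrix.transpose_zero, Matrix.transpose_neg,
      Matrix.transpose_mul, Matrix.transpose_add, hinvsym, hsym, Matrix.add_mul,
      Matrix.mul_add, Matrix.mul_one, Matrix.one_mul, Matrix.neg_mul, Matrix.mul_neg,
      Matrix.zero_mul, Matrix.mul_zero, add_zero, zero_add, neg_neg, Matrix.mul_assoc,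
      hK, hK2, h1, h2, mul_one] <;>
    abel
end

section
/- Suppose f : ℝ^N → ℝ is differentiable, bounded below, with L-Lipschitz gradient, and the backtracking line search with trial point adjustment is run: at each iterate u^k, a direction Δu^k = −B_k⁻¹∇f(u^k) is taken with B_k symmetric positive definite with eigenvalues in [λ, Λ] (0 < λ ≤ Λ < ∞), a step size s_k = α^{j_k} is chosen as the largest α^j (j ≥ 0, α ∈ (0,1)) satisfying f(u_d(u^k + s Δu^k)) − f(u^k) ≤ δ s ∇f(u^k)ᵀΔu^k with δ ∈ (0,1/2), and u^{k+1} = u_d(u^k + s_k Δu^k) where the adjustment u_d satisfies f(u_d(u)) ≤ f(u) for all u. Then ∇f(u^k) → 0 as k → ∞. -/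
open scoped InnerProductSpace

lemma quad_cs {N : ℕ} (B : EuclideanSpace ℝ (Fin N) →L[ℝ] EuclideanSpace ℝ (Fin N))
    (hsym : ∀ x y, ⟪B x, y⟫_ℝ = ⟪x, B y⟫_ℝ)
    (hpos : ∀ x, 0 ≤ ⟪B x, x⟫_ℝ) (x y : EuclideanSpace ℝ (Fin N)) :
    ⟪B x, y⟫_ℝ ^ 2 ≤ ⟪B x, x⟫_ℝ * ⟪B y, y⟫_ℝ := by
  have key : ∀ t : ℝ, 0 ≤ ⟪B x, x⟫_ℝ * (t * t) + (2 * ⟪B x, y⟫_ℝ) * t + ⟪B y, y⟫_ℝ := by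
    intro t
    have h := hpos (t • x + y)
    have hexp : ⟪B (t • x + y), t • x + y⟫_ℝ
        = ⟪B x, x⟫_ℝ * (t * t) + (2 * ⟪B x, y⟫_ℝ) * t + ⟪B y, y⟫_ℝ := by
      have hyx : ⟪B y, x⟫_ℝ = ⟪B x, y⟫_ℝ := by
        rw [hsym y x, real_inner_comm]
      simp only [map_add, map_smul, inner_add_left, inner_add_right,
        real_inner_smul_left, real_inner_smul_right, hyx]
      ring
    linarith [hexp ▸ h]
  have hd := discrim_le_zero (a := ⟪B x, x⟫_ℝ) (b := 2 * ⟪B x, y⟫_ℝ) (c := ⟪B y, y⟫_ℝ) key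
  rw [discrim] at hd
  nlinarith [hd]

lemma norm_apply_le {N : ℕ} (B : EuclideanSpace ℝ (Fin N) →L[ℝ] EuclideanSpace ℝ (Fin N))
    (hsym : ∀ x y, ⟪B x, y⟫_ℝ = ⟪x, B y⟫_ℝ) (Lam : ℝ) (hLam : 0 ≤ Lam)
    (hpos : ∀ x, 0 ≤ ⟪B x, x⟫_ℝ) (hup : ∀ x, ⟪B x, x⟫_ℝ ≤ Lam * ‖x‖ ^ 2)
    (x : EuclideanSpace ℝ (Fin N)) : ‖B x‖ ≤ Lam * ‖x‖ := by
  have h := quad_cs B hsym hpos x (B x)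
  rw [real_inner_self_eq_norm_sq] at h
  have h2 : (‖B x‖ ^ 2) ^ 2 ≤ (Lam * ‖x‖ ^ 2) * (Lam * ‖B x‖ ^ 2) :=
    le_trans h (by
      have := hup x
      have := hup (B x)
      nlinarith [hpos x, hpos (B x)])
  by_contra hcon
  push_neg at hcon
  have hb : 0 ≤ Lam * ‖x‖ := mul_nonneg hLam (norm_nonneg x)
  have ha : 0 < ‖B x‖ := lt_of_le_of_lt hb hcon
  have h3 : (Lam * ‖x‖) ^ 2 < ‖B x‖ ^ 2 := by nlinarith
  nlinarith [mul_pos ha ha, mul_lt_mul_of_pos_right h3 (mul_pos ha ha)]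



lemma descent_lemma {N : ℕ} (f : EuclideanSpace ℝ (Fin N) → ℝ) (hf : Differentiable ℝ f)
    (L : ℝ) (hL : 0 ≤ L)
    (hlip : ∀ x y, ‖gradient f x - gradient f y‖ ≤ L * ‖x - y‖)
    (x v : EuclideanSpace ℝ (Fin N)) (s : ℝ) (hs : 0 ≤ s) :
    f (x + s • v) ≤ f x + s * ⟪gradient f x, v⟫_ℝ + L * s ^ 2 * ‖v‖ ^ 2 / 2 := by
  set h : ℝ → ℝ := fun t =>
    f x + t * ⟪gradient f x, v⟫_ℝ + L * t ^ 2 * ‖v‖ ^ 2 / 2 - f (x + t • v) with hh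
  have hφ : ∀ t : ℝ, HasDerivAt (fun t : ℝ => f (x + t • v))
      ⟪gradient f (x + t • v), v⟫_ℝ t := by
    intro t
    have hc : HasDerivAt (fun t : ℝ => x + t • v) v t := by
      simpa using ((hasDerivAt_id t).smul_const v).const_add x
    have h1 := (hf (x + t • v)).hasGradientAt.hasFDerivAt.comp_hasDerivAt t hc
    simp only [InnerProductSpace.toDual_apply_apply] at h1
    exact h1
  have hh' : ∀ t : ℝ, HasDerivAt h
      (⟪gradient f x, v⟫_ℝ + L * t * ‖v‖ ^ 2 - ⟪gradient f (x + t • v), v⟫_ℝ) t := by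
    intro t
    have h1 : HasDerivAt (fun t : ℝ => f x + t * ⟪gradient f x, v⟫_ℝ
        + L * t ^ 2 * ‖v‖ ^ 2 / 2) (⟪gradient f x, v⟫_ℝ + L * t * ‖v‖ ^ 2) t := by
      have ha : HasDerivAt (fun t : ℝ => t * ⟪gradient f x, v⟫_ℝ)
          ⟪gradient f x, v⟫_ℝ t := by simpa using (hasDerivAt_id t).mul_const _
      have hb : HasDerivAt (fun t : ℝ => L * t ^ 2 * ‖v‖ ^ 2 / 2)
          (L * t * ‖v‖ ^ 2) t := by
        have := ((hasDerivAt_pow 2 t).const_mul L).mul_const (‖v‖ ^ 2 / 2)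
        convert this using 1
        · rfl
        · rfl
        · funext y; ring
        · norm_num; ring
      exact (ha.const_add (f x)).add hb
    exact h1.sub (hφ t)
  have hmono : MonotoneOn h (Set.Icc 0 s) := by
    apply monotoneOn_of_deriv_nonneg (convex_Icc 0 s)
    · exact Continuous.continuousOn
        (Differentiable.continuous (fun t => (hh' t).differentiableAt))
    · intro t ht
      exact ((hh' t).differentiableAt).differentiableWithinAt
    · intro t ht
      rw [interior_Icc] at ht
      rw [(hh' t).deriv]
      have hineq : ⟪gradient f (x + t • v) - gradient f x, v⟫_ℝ ≤ L * t * ‖v‖ ^ 2 := by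
        calc ⟪gradient f (x + t • v) - gradient f x, v⟫_ℝ
            ≤ ‖gradient f (x + t • v) - gradient f x‖ * ‖v‖ := real_inner_le_norm _ _
          _ ≤ (L * ‖(x + t • v) - x‖) * ‖v‖ := by
              exact mul_le_mul_of_nonneg_right (hlip _ _) (norm_nonneg v)
          _ = L * t * ‖v‖ ^ 2 := by
              simp [norm_smul, abs_of_nonneg (le_of_lt ht.1)]
              ring
      rw [inner_sub_left] at hineq
      linarith
  have h0 : h 0 = 0 := by simp [hh]
  have hs' : h 0 ≤ h s := hmono (Set.left_mem_Icc.mpr hs) (Set.right_mem_Icc.mpr hs) hs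
  rw [h0] at hs'
  simp only [hh] at hs'
  linarith


set_option maxHeartbeats 1000000 in
/-- Global convergence of the backtracking line search with trial point adjustment:
if `f` is differentiable, bounded below, with `L`-Lipschitz gradient, directions are
`Δu^k = -B_k⁻¹ ∇f(u^k)` with `B_k` symmetric with spectrum in `[λ, Λ] ⊂ (0,∞)`, step
sizes `α^{j_k}` are chosen by backtracking (smallest `j` satisfying the Armijo
condition on the adjusted trial point), the adjustment satisfies `f(u_d(u)) ≤ f(u)`,
and `u^{k+1} = u_d(u^k + α^{j_k} Δu^k)`, then `∇f(u^k) → 0`. -/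
theorem stmt15 {N : ℕ}
    (f : EuclideanSpace ℝ (Fin N) → ℝ) (hf : Differentiable ℝ f)
    (hbdd : BddBelow (Set.range f))
    (L : NNReal) (hlip : LipschitzWith L (gradient f))
    (δ α lam Lam : ℝ) (hδ : δ ∈ Set.Ioo (0:ℝ) (1/2)) (hα : α ∈ Set.Ioo (0:ℝ) 1)
    (hlam : 0 < lam) (hlamLam : lam ≤ Lam)
    (B : ℕ → EuclideanSpace ℝ (Fin N) →L[ℝ] EuclideanSpace ℝ (Fin N))
    (hsym : ∀ k x y, ⟪B k x, y⟫_ℝ = ⟪x, B k y⟫_ℝ)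
    (heig : ∀ k x, lam * ‖x‖ ^ 2 ≤ ⟪B k x, x⟫_ℝ ∧ ⟪B k x, x⟫_ℝ ≤ Lam * ‖x‖ ^ 2)
    (ud : EuclideanSpace ℝ (Fin N) → EuclideanSpace ℝ (Fin N))
    (hud : ∀ x, f (ud x) ≤ f x)
    (u Δu : ℕ → EuclideanSpace ℝ (Fin N))
    (hdir : ∀ k, B k (Δu k) = -gradient f (u k))
    (j : ℕ → ℕ)
    (harmijo : ∀ k, f (ud (u k + α ^ j k • Δu k)) - f (u k) ≤
        δ * α ^ j k * ⟪gradient f (u k), Δu k⟫_ℝ)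
    (hmin : ∀ k j', j' < j k →
        ¬ (f (ud (u k + α ^ j' • Δu k)) - f (u k) ≤
            δ * α ^ j' * ⟪gradient f (u k), Δu k⟫_ℝ))
    (hupd : ∀ k, u (k + 1) = ud (u k + α ^ j k • Δu k)) :
    Filter.Tendsto (fun k => gradient f (u k)) Filter.atTop (nhds 0) := by
  obtain ⟨hδ0, hδ2⟩ := hδ
  obtain ⟨hα0, hα1⟩ := hα
  have hLam0 : 0 < Lam := lt_of_lt_of_le hlam hlamLam
  set L' : ℝ := max (L : ℝ) 1 with hL'
  have hL'0 : 0 < L' := lt_of_lt_of_le one_pos (le_max_right _ _)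
  have hlip' : ∀ x y, ‖gradient f x - gradient f y‖ ≤ L' * ‖x - y‖ := by
    intro x y
    calc ‖gradient f x - gradient f y‖ = dist (gradient f x) (gradient f y) :=
          (dist_eq_norm _ _).symm
      _ ≤ (L : ℝ) * dist x y := hlip.dist_le_mul x y
      _ ≤ L' * ‖x - y‖ := by
          rw [dist_eq_norm]
          exact mul_le_mul_of_nonneg_right (le_max_left _ _) (norm_nonneg _)
  set g : ℕ → EuclideanSpace ℝ (Fin N) := fun k => gradient f (u k) with hg
  set s : ℕ → ℝ := fun k => α ^ j k with hsdef
  have hs_pos : ∀ k, 0 < s k := fun k => pow_pos hα0 _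
  have hs_le1 : ∀ k, s k ≤ 1 := fun k => pow_le_one₀ (le_of_lt hα0) (le_of_lt hα1)
  -- inner product bound
  have h_gΔ : ∀ k, ⟪g k, Δu k⟫_ℝ ≤ -(lam * ‖Δu k‖ ^ 2) := by
    intro k
    have : ⟪g k, Δu k⟫_ℝ = -⟪B k (Δu k), Δu k⟫_ℝ := by
      rw [hdir k, inner_neg_left, neg_neg, hg]
    rw [this]
    exact neg_le_neg ((heig k (Δu k)).1)
  have h_gnorm : ∀ k, ‖g k‖ ≤ Lam * ‖Δu k‖ := by
    intro k
    have : ‖g k‖ = ‖B k (Δu k)‖ := by rw [hdir k, norm_neg]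
    rw [this]
    exact norm_apply_le (B k) (hsym k) Lam (le_of_lt hLam0)
      (fun x => le_trans (mul_nonneg (le_of_lt hlam) (sq_nonneg _)) (heig k x).1)
      (fun x => (heig k x).2) (Δu k)
  -- step size lower bound
  set c : ℝ := min 1 (α * (2 * (1 - δ) * lam / L')) with hc
  have hc0 : 0 < c := by
    apply lt_min one_pos
    apply mul_pos hα0
    apply div_pos _ hL'0
    nlinarith
  have hstep : ∀ k, c ≤ s k := by
    intro k
    rcases Nat.eq_zero_or_pos (j k) with h0 | hpos
    · rw [hsdef]; simp only [h0, pow_zero]; exact min_le_left _ _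
    · obtain ⟨m, hm⟩ : ∃ m, j k = m + 1 := ⟨j k - 1, (Nat.succ_pred_eq_of_pos hpos).symm⟩
      have hfail := hmin k m (by omega)
      push_neg at hfail
      have hsm : (0:ℝ) < α ^ m := pow_pos hα0 m
      have hfail2 : δ * α ^ m * ⟪g k, Δu k⟫_ℝ < f (u k + α ^ m • Δu k) - f (u k) :=
        lt_of_lt_of_le hfail (by linarith [hud (u k + α ^ m • Δu k)])
      have hdesc := descent_lemma f hf L' (le_of_lt hL'0) hlip' (u k) (Δu k)
        (α ^ m) (le_of_lt hsm)
      have hΔ0 : ‖Δu k‖ ^ 2 ≠ 0 := by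
        intro hz
        have hz' : ⟪g k, Δu k⟫_ℝ ≤ 0 := le_trans (h_gΔ k) (by rw [hz]; simp)
        have hz'' : ⟪g k, Δu k⟫_ℝ = 0 := by
          have h1 : -(lam * ‖Δu k‖ ^ 2) = 0 := by rw [hz]; ring
          have := h_gΔ k
          have hΔzero : Δu k = 0 := by
            have := sq_eq_zero_iff.mp hz
            exact norm_eq_zero.mp this
          rw [hΔzero, inner_zero_right]
        rw [hz''] at hfail2
        have hΔzero : Δu k = 0 := norm_eq_zero.mp (sq_eq_zero_iff.mp hz)
        rw [hΔzero] at hfail2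
        simp at hfail2
      have hΔsq : 0 < ‖Δu k‖ ^ 2 := lt_of_le_of_ne (sq_nonneg _) (Ne.symm hΔ0)
      -- combine: δ s' I < s' I + L' s'^2 d / 2, I ≤ -lam d
      have hkey : 2 * (1 - δ) * lam / L' < α ^ m := by
        have hI := h_gΔ k
        have hdesc' : f (u k + α ^ m • Δu k) ≤ f (u k) + α ^ m * ⟪g k, Δu k⟫_ℝ
            + L' * (α ^ m) ^ 2 * ‖Δu k‖ ^ 2 / 2 := hdesc
        have hmul : (1 - δ) * α ^ m * (⟪g k, Δu k⟫_ℝ + lam * ‖Δu k‖ ^ 2) ≤ 0 :=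
          mul_nonpos_of_nonneg_of_nonpos
            (mul_nonneg (by linarith) hsm.le) (by linarith)
        have h1 : (1 - δ) * (α ^ m) * (lam * ‖Δu k‖ ^ 2)
            < L' * (α ^ m) ^ 2 * ‖Δu k‖ ^ 2 / 2 := by nlinarith [hmul, hfail2, hdesc']
        rw [div_lt_iff₀ hL'0]
        nlinarith [mul_pos hsm hΔsq]
      calc c ≤ α * (2 * (1 - δ) * lam / L') := min_le_right _ _
        _ ≤ α * α ^ m := mul_le_mul_of_nonneg_left (le_of_lt hkey) (le_of_lt hα0)
        _ = s k := by rw [hsdef]; simp only [hm]; ring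
  -- decrease
  set a : ℕ → ℝ := fun k => f (u k) with ha
  have h_dec : ∀ k, a (k + 1) - a k ≤ δ * s k * ⟪g k, Δu k⟫_ℝ := by
    intro k
    rw [ha]
    simp only [hupd k]
    exact harmijo k
  have hsum : ∀ k, δ * lam * c * ‖Δu k‖ ^ 2 ≤ a k - a (k + 1) := by
    intro k
    have h1 := h_dec k
    have h2 := h_gΔ k
    have h3 := hstep k
    have h4 := hs_pos k
    have hm1 : δ * s k * (⟪g k, Δu k⟫_ℝ + lam * ‖Δu k‖ ^ 2) ≤ 0 :=
      mul_nonpos_of_nonneg_of_nonpos (mul_nonneg hδ0.le h4.le) (by linarith)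
    have hm2 : 0 ≤ δ * lam * ‖Δu k‖ ^ 2 * (s k - c) :=
      mul_nonneg (by positivity) (by linarith)
    nlinarith [hm1, hm2, h1]
  have h_anti : Antitone a := by
    apply antitone_nat_of_succ_le
    intro k
    have := hsum k
    nlinarith [sq_nonneg ‖Δu k‖, mul_pos (mul_pos hδ0 hlam) hc0]
  have h_bdd : BddBelow (Set.range a) := by
    apply hbdd.mono
    rintro _ ⟨k, rfl⟩
    exact ⟨u k, rfl⟩
  have h_conv : Filter.Tendsto a Filter.atTop (nhds (⨅ k, a k)) :=
    tendsto_atTop_ciInf h_anti h_bdd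
  have h_conv' : Filter.Tendsto (fun k => a (k + 1)) Filter.atTop (nhds (⨅ k, a k)) :=
    h_conv.comp (Filter.tendsto_add_atTop_nat 1)
  have h_diff : Filter.Tendsto (fun k => a k - a (k + 1)) Filter.atTop (nhds 0) := by
    have h := h_conv.sub h_conv'
    rw [sub_self] at h
    exact h
  have hr : 0 < δ * lam * c := mul_pos (mul_pos hδ0 hlam) hc0
  have h_sq0 : Filter.Tendsto (fun k => ‖Δu k‖ ^ 2) Filter.atTop (nhds 0) := by
    apply squeeze_zero (fun k => sq_nonneg _)
      (g := fun k => (a k - a (k + 1)) / (δ * lam * c))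
    · intro k
      rw [le_div_iff₀ hr]
      linarith [hsum k]
    · have := h_diff.div_const (δ * lam * c)
      simpa using this
  have h_Δ0 : Filter.Tendsto (fun k => ‖Δu k‖) Filter.atTop (nhds 0) := by
    have hcomp : Filter.Tendsto (fun k => Real.sqrt (‖Δu k‖ ^ 2)) Filter.atTop
        (nhds (Real.sqrt 0)) := (Real.continuous_sqrt.tendsto 0).comp h_sq0
    have heq : (fun k => Real.sqrt (‖Δu k‖ ^ 2)) = fun k => ‖Δu k‖ := by
      funext k; exact Real.sqrt_sq (norm_nonneg _)
    rw [heq, Real.sqrt_zero] at hcomp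
    exact hcomp
  rw [tendsto_zero_iff_norm_tendsto_zero]
  apply squeeze_zero (fun k => norm_nonneg _) (fun k => h_gnorm k)
  have := h_Δ0.const_mul Lam
  simpa using this
end
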